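/- arXiv:1810.02946 — 2 statements merged into one kernel-verified Lean document; each statement's English description precedes it below -/
import Mathlib

section
/- For λ > 0 define A_0(λ) = 2λ²·log(2λ) − 3λ², A_1(λ) = −(1/12)·log λ, and A_g(λ) = (B_{2g}/(2g(2g−2)))·(2λ)^{2−2g} for g ≥ 2. Then for every integer n ≥ 1 and every λ > 0, Σ_{k=1}^{n} (2/(2k)!) · A_{n−k}^{(2k)}(λ) = 4·log(2λ) if n = 1, and = −(1/(n−1))·(2λ)^{2−2n} if n ≥ 2. (That is, the formal series F(λ;ℏ) = Σ_{g≥0} ℏ^{2g−2} A_g(λ) solves F(λ+ℏ) − 2F(λ) + F(λ−ℏ) = 2·log(2λ) + log(2λ+ℏ) + log(2λ−ℏ) order by order in ℏ, using the expansion log(2λ+ℏ) + log(2λ−ℏ) = 2·log(2λ) − Σ_{m≥1} (1/m)(ℏ/(2λ))^{2m}.) -/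
open Real Filter Finset

private lemma iterD_congr {f g : ℝ → ℝ} {l : ℝ} (hl : 0 < l)
    (h : ∀ x : ℝ, 0 < x → f x = g x) (m : ℕ) :
    iteratedDeriv m f l = iteratedDeriv m g l := by
  apply Filter.EventuallyEq.iteratedDeriv_eq
  filter_upwards [eventually_gt_nhds hl] with x hx using h x hx

private lemma iterD_step {f g : ℝ → ℝ} (h : ∀ x : ℝ, 0 < x → HasDerivAt f (g x) x)
    {l : ℝ} (hl : 0 < l) (m : ℕ) :
    iteratedDeriv (m + 1) f l = iteratedDeriv m g l := by
  rw [iteratedDeriv_succ']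
  apply Filter.EventuallyEq.iteratedDeriv_eq
  filter_upwards [eventually_gt_nhds hl] with x hx using (h x hx).deriv

private lemma iterD_const_mul (c : ℝ) (f : ℝ → ℝ) (m : ℕ) :
    iteratedDeriv m (fun x => c * f x) = fun x => c * iteratedDeriv m f x := by
  induction m with
  | zero => simp
  | succ m ih =>
    rw [iteratedDeriv_succ, ih]
    funext x
    rw [iteratedDeriv_succ, deriv_const_mul_field]

private lemma iterD_zpow (c : ℝ) (e : ℤ) (m : ℕ) (x : ℝ) :
    iteratedDeriv m (fun y : ℝ => c * y ^ e) x
      = c * ((∏ i ∈ range m, ((e : ℝ) - i)) * x ^ (e - m)) := by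
  rw [iterD_const_mul, iteratedDeriv_eq_iterate]
  simp only [iter_deriv_zpow]

private lemma prod_neg (m : ℕ) :
    ∏ i ∈ Finset.range m, ((-1 : ℝ) - i) = (-1)^m * m.factorial := by
  induction m with
  | zero => simp
  | succ m ih =>
    rw [Finset.prod_range_succ, ih, Nat.factorial_succ]
    push_cast; ring

private lemma prod_asc (a : ℕ) (ha : 1 ≤ a) (M : ℕ) :
    ((a-1).factorial : ℝ) * ∏ i ∈ Finset.range M, ((a : ℝ) + i)
      = ((a - 1 + M).factorial : ℝ) := by
  induction M with
  | zero => simp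
  | succ M ih =>
    rw [Finset.prod_range_succ, ← mul_assoc, ih]
    have h1 : a - 1 + (M+1) = (a-1+M) + 1 := by omega
    rw [h1, Nat.factorial_succ]
    have h2 : ((a:ℝ) + M) = ((a - 1 + M : ℕ) : ℝ) + 1 := by
      push_cast [Nat.cast_sub ha]; ring
    rw [h2]; push_cast; ring

private lemma hd_log2 {x : ℝ} (hx : 0 < x) :
    HasDerivAt (fun y : ℝ => Real.log (2*y)) x⁻¹ x := by
  have hin : HasDerivAt (fun y : ℝ => 2*y) 2 x := by simpa using (hasDerivAt_id x).const_mul 2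
  have h := (Real.hasDerivAt_log (by positivity : (2:ℝ)*x ≠ 0)).comp x hin
  refine h.congr_deriv ?_
  field_simp

private lemma hd_f0 {x : ℝ} (hx : 0 < x) :
    HasDerivAt (fun y : ℝ => 2*y^2*Real.log (2*y) - 3*y^2)
      (4*x*Real.log (2*x) - 4*x) x := by
  have h1 : HasDerivAt (fun y : ℝ => y^2) (2*x) x := by simpa using hasDerivAt_pow 2 x
  have h := ((h1.const_mul 2).mul (hd_log2 hx)).sub (h1.const_mul 3)
  refine h.congr_deriv ?_
  field_simp
  ring
private lemma hd_f1 {x : ℝ} (hx : 0 < x) :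
    HasDerivAt (fun y : ℝ => 4*y*Real.log (2*y) - 4*y) (4*Real.log (2*x)) x := by
  have h1 : HasDerivAt (fun y : ℝ => 4*y) 4 x := by
    simpa using (hasDerivAt_id x).const_mul 4
  have h := (h1.mul (hd_log2 hx)).sub h1
  refine h.congr_deriv ?_
  field_simp
  ring

private lemma hd_f2 {x : ℝ} (hx : 0 < x) :
    HasDerivAt (fun y : ℝ => 4*Real.log (2*y)) (4*x^(-1:ℤ)) x := by
  have h := (hd_log2 hx).const_mul 4
  refine h.congr_deriv ?_
  simp [zpow_neg_one]

private lemma hd_A1 {x : ℝ} (hx : 0 < x) :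
    HasDerivAt (fun y : ℝ => -(1/12)*Real.log y) (-(1/12)*x^(-1:ℤ)) x := by
  have h := (Real.hasDerivAt_log hx.ne').const_mul (-(1/12) : ℝ)
  refine h.congr_deriv ?_
  simp [zpow_neg_one]
private lemma prod_desc {a M : ℕ} (ha : 1 ≤ a) (hM : Even M) :
    ∏ i ∈ Finset.range M, ((-(a:ℝ)) - i)
      = ((a - 1 + M).factorial : ℝ)/((a-1).factorial : ℝ) := by
  have h1 : ∏ i ∈ Finset.range M, ((-(a:ℝ)) - i)
      = (-1)^M * ∏ i ∈ Finset.range M, ((a:ℝ) + i) := by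
    calc ∏ i ∈ Finset.range M, ((-(a:ℝ)) - i)
        = ∏ i ∈ Finset.range M, ((-1) * ((a:ℝ) + i)) :=
          Finset.prod_congr rfl fun i _ => by ring
      _ = (-1)^M * ∏ i ∈ Finset.range M, ((a:ℝ) + i) := by
          rw [Finset.prod_mul_distrib, Finset.prod_const, Finset.card_range]
  rw [h1, hM.neg_one_pow, one_mul, eq_div_iff (by positivity), mul_comm,
    prod_asc a ha M]

private lemma D0 {l : ℝ} (hl : 0 < l) (n : ℕ) (hn : 2 ≤ n) :
    iteratedDeriv (2*n) (fun y : ℝ => 2*y^2*Real.log (2*y) - 3*y^2) l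
      = -(4 * ((2*n-3).factorial : ℝ)) * l^(2-2*(n:ℤ)) := by
  obtain ⟨m, hm⟩ : ∃ m, 2*n = (m+1)+1+1 := ⟨2*n-3, by omega⟩
  have hm3 : m = 2*n-3 := by omega
  conv_lhs => rw [hm]
  rw [iterD_step (fun x hx => hd_f0 hx) hl, iterD_step (fun x hx => hd_f1 hx) hl,
      iterD_step (fun x hx => hd_f2 hx) hl, iterD_zpow]
  have hc : ∀ i ∈ range m, (((-1:ℤ):ℝ) - (i:ℝ)) = ((-1:ℝ) - i) := by intros; norm_num
  rw [Finset.prod_congr rfl hc, prod_neg]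
  have hodd : Odd m := ⟨n-2, by omega⟩
  have hexp : (-1 : ℤ) - (m:ℤ) = 2 - 2*(n:ℤ) := by omega
  rw [hodd.neg_one_pow, hexp, hm3]
  ring

private lemma D1 {l : ℝ} (hl : 0 < l) (n : ℕ) (hn : 2 ≤ n) :
    iteratedDeriv (2*n-2) (fun y : ℝ => -(1/12)*Real.log y) l
      = (1/12) * ((2*n-3).factorial : ℝ) * l^(2-2*(n:ℤ)) := by
  obtain ⟨m, hm⟩ : ∃ m, 2*n-2 = m+1 := ⟨2*n-3, by omega⟩
  have hm3 : m = 2*n-3 := by omega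
  conv_lhs => rw [hm]
  rw [iterD_step (fun x hx => hd_A1 hx) hl, iterD_zpow]
  have hc : ∀ i ∈ range m, (((-1:ℤ):ℝ) - (i:ℝ)) = ((-1:ℝ) - i) := by intros; norm_num
  rw [Finset.prod_congr rfl hc, prod_neg]
  have hodd : Odd m := ⟨n-2, by omega⟩
  have hexp : (-1 : ℤ) - (m:ℤ) = 2 - 2*(n:ℤ) := by omega
  rw [hodd.neg_one_pow, hexp, hm3]
  ring

private lemma Dg {l : ℝ} (hl : 0 < l) (c : ℝ) (n g : ℕ) (hg : 2 ≤ g) (hgn : g < n) :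
    iteratedDeriv (2*(n-g)) (fun y : ℝ => c * y^(2-2*(g:ℤ))) l
      = c * (((2*n-3).factorial : ℝ)/((2*g-3).factorial : ℝ)) * l^(2-2*(n:ℤ)) := by
  rw [iterD_zpow]
  have hc : ∀ i ∈ range (2*(n-g)), (((2-2*(g:ℤ) : ℤ):ℝ) - (i:ℝ))
      = ((-(((2*g-2:ℕ)):ℝ)) - i) := by
    intro i _
    have : ((2-2*(g:ℤ) : ℤ):ℝ) = -(((2*g-2:ℕ)):ℝ) := by
      push_cast [Nat.cast_sub (by omega : 2 ≤ 2*g)]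
      push_cast
      ring
    rw [this]
  rw [Finset.prod_congr rfl hc, prod_desc (by omega) ⟨n-g, by omega⟩]
  have h1 : 2*g-2-1+2*(n-g) = 2*n-3 := by omega
  have h2 : 2*g-2-1 = 2*g-3 := by omega
  have hexp : 2-2*(g:ℤ) - ((2*(n-g):ℕ):ℤ) = 2 - 2*(n:ℤ) := by omega
  rw [h1, h2, hexp]
  ring

private lemma eval_bern (m : ℕ) (x : ℚ) :
    (Polynomial.bernoulli m).eval x
      = ∑ i ∈ range (m+1), bernoulli i * (m.choose i) * x^(m-i) := by
  rw [Polynomial.bernoulli, Polynomial.eval_finset_sum]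
  exact Finset.sum_congr rfl fun i _ => by rw [Polynomial.eval_monomial]

private lemma eval_two (m : ℕ) :
    ∑ i ∈ range (m+1), bernoulli i * (m.choose i) * 2^(m-i) = bernoulli' m + m := by
  rw [← eval_bern, (by norm_num : (2:ℚ) = 1 + 1), Polynomial.bernoulli_eval_one_add,
    Polynomial.bernoulli_eval_one, one_pow, mul_one]

private lemma choose_id_nat {N k : ℕ} (hk : k < N) :
    (N - k) * N.choose k = N * ((N-1).choose k) := by
  have h1 := Nat.choose_mul_factorial_mul_factorial (le_of_lt hk)
  have h2 := Nat.choose_mul_factorial_mul_factorial (by omega : k ≤ N - 1)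
  have hpos : 0 < k.factorial * (N - 1 - k).factorial :=
    Nat.mul_pos (Nat.factorial_pos _) (Nat.factorial_pos _)
  apply Nat.eq_of_mul_eq_mul_right hpos
  have e1 : N - k = (N - 1 - k) + 1 := by omega
  have e2 : N = (N - 1) + 1 := by omega
  calc (N-k) * N.choose k * (k.factorial * (N-1-k).factorial)
      = N.choose k * k.factorial * ((N-k) * (N-1-k).factorial) := by ring
    _ = N.choose k * k.factorial * (N-k).factorial := by
        rw [e1, Nat.factorial_succ]
    _ = N.factorial := h1
    _ = N * (N-1).factorial := by
        conv_lhs => rw [e2]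
        rw [Nat.factorial_succ, ← e2]
    _ = N * ((N-1).choose k * k.factorial * (N-1-k).factorial) := by rw [h2]
    _ = N * ((N-1).choose k) * (k.factorial * (N-1-k).factorial) := by ring

private lemma sum_range_two_mul (f : ℕ → ℚ) (n : ℕ) :
    ∑ k ∈ range (2*n), f k = ∑ g ∈ range n, (f (2*g) + f (2*g+1)) := by
  induction n with
  | zero => simp
  | succ n ih =>
    have h : 2*(n+1) = (2*n)+1+1 := by ring
    rw [h, sum_range_succ, sum_range_succ, ih, sum_range_succ]
    ring

private lemma key_full (n : ℕ) (hn : 2 ≤ n) :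
    ∑ k ∈ range (2*n), (((k:ℚ) - 1) * ((2*n).choose k) * bernoulli k * 2^(2*n-k))
      = -((2*n:ℚ)) * (2*n-1) := by
  have hsplit : ∀ k ∈ range (2*n),
      ((k:ℚ) - 1) * ((2*n).choose k) * bernoulli k * 2^(2*n-k)
        = (2*(n:ℚ)-1) * (bernoulli k * ((2*n).choose k) * 2^(2*n-k))
          - (2*(n:ℚ)) * (bernoulli k * ((2*n-1).choose k) * (2 * 2^(2*n-1-k))) := by
    intro k hk
    rw [mem_range] at hk
    have hc : ((2*n - k : ℕ) : ℚ) * ((2*n).choose k) = (2*n) * ((2*n-1).choose k) := by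
      exact_mod_cast congrArg (Nat.cast : ℕ → ℚ) (choose_id_nat hk)
    have hk1 : (k:ℚ) - 1 = (2*(n:ℚ)-1) - ((2*n - k : ℕ) : ℚ) := by
      push_cast [Nat.cast_sub (le_of_lt hk)]; ring
    have hp : (2:ℚ)^(2*n-k) = 2 * 2^(2*n-1-k) := by
      rw [(by omega : 2*n-k = (2*n-1-k)+1), pow_succ]; ring
    rw [hk1, hp]
    push_cast at hc ⊢
    linear_combination (-(2 * bernoulli k * 2^(2*n-1-k))) * hc
  rw [Finset.sum_congr rfl hsplit, Finset.sum_sub_distrib, ← Finset.mul_sum, ← Finset.mul_sum]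
  have hG : ∑ k ∈ range (2*n), bernoulli k * ((2*n).choose k) * 2^(2*n-k) = 2*(n:ℚ) := by
    have h := eval_two (2*n)
    rw [sum_range_succ] at h
    have h2n : bernoulli (2*n) * ((2*n).choose (2*n)) * 2^(2*n-2*n) = bernoulli (2*n) := by
      simp
    rw [h2n] at h
    have hb : bernoulli' (2*n) = bernoulli (2*n) :=
      (bernoulli_eq_bernoulli'_of_ne_one (by omega)).symm
    rw [hb] at h
    push_cast at h ⊢
    linarith
  have hH : ∑ k ∈ range (2*n), bernoulli k * ((2*n-1).choose k) * (2 * 2^(2*n-1-k))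
      = 2*(2*(n:ℚ)-1) := by
    have h := eval_two (2*n-1)
    have hr : range (2*n) = range ((2*n-1)+1) := congrArg range (by omega)
    rw [hr]
    have hstep : ∀ k ∈ range ((2*n-1)+1),
        bernoulli k * (((2*n-1).choose k : ℕ) : ℚ) * (2 * 2^(2*n-1-k))
          = 2 * (bernoulli k * (((2*n-1).choose k : ℕ) : ℚ) * 2^(2*n-1-k)) := by
      intro k _; ring
    rw [Finset.sum_congr rfl hstep, ← Finset.mul_sum, h]
    have hb : bernoulli' (2*n-1) = 0 :=
      bernoulli'_eq_zero_of_odd ⟨n-1, by omega⟩ (by omega)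
    rw [hb]
    have : ((2*n-1 : ℕ) : ℚ) = 2*(n:ℚ)-1 := by
      push_cast [Nat.cast_sub (by omega : 1 ≤ 2*n)]; ring
    rw [this]; ring
  rw [hG, hH]
  push_cast
  ring

private lemma key_even (n : ℕ) (hn : 2 ≤ n) :
    ∑ g ∈ range n, ((2*(g:ℚ) - 1) * ((2*n).choose (2*g)) * bernoulli (2*g) * 2^(2*n-2*g))
      = -(2*(n:ℚ)) * (2*(n:ℚ)-1) := by
  have h := key_full n hn
  rw [sum_range_two_mul] at h
  have hterm : ∀ g ∈ range n,
      ((((2*g:ℕ):ℚ) - 1) * ((2*n).choose (2*g)) * bernoulli (2*g) * 2^(2*n-2*g)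
        + (((2*g+1:ℕ):ℚ) - 1) * ((2*n).choose (2*g+1)) * bernoulli (2*g+1) * 2^(2*n-(2*g+1)))
      = (2*(g:ℚ) - 1) * ((2*n).choose (2*g)) * bernoulli (2*g) * 2^(2*n-2*g) := by
    intro g _
    have hz : (((2*g+1:ℕ):ℚ) - 1) * ((2*n).choose (2*g+1)) * bernoulli (2*g+1)
        * 2^(2*n-(2*g+1)) = 0 := by
      rcases Nat.eq_zero_or_pos g with h0 | h1
      · subst h0; norm_num
      · have hb : bernoulli (2*g+1) = 0 := by
          rw [bernoulli_eq_bernoulli'_of_ne_one (by omega)]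
          exact bernoulli'_eq_zero_of_odd ⟨g, by omega⟩ (by omega)
        rw [hb]; ring
    rw [hz, add_zero]
    push_cast
    ring
  rw [Finset.sum_congr rfl hterm] at h
  exact h


private lemma scal (B Pg N1 C N4 f2k f2g3 gR L : ℝ) (h2k : f2k ≠ 0) (hg0 : 2*gR ≠ 0)
    (hg1 : 2*gR-1 ≠ 0) (hg2 : 2*gR-2 ≠ 0) (hf3 : f2g3 ≠ 0) (hC : C ≠ 0)
    (hN4 : N4 = C * (2*gR*(2*gR-1)*(2*gR-2)*f2g3) * f2k) :
    2/f2k * (B/(2*gR*(2*gR-2)) * Pg * (N1/f2g3) * L)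
      = 2*N1/N4 * ((2*gR-1)*C*B) * Pg * L := by
  subst hN4
  field_simp

private noncomputable def cstR (m : ℕ) : ℝ :=
  2 * ((2*m+1).factorial : ℝ) / (((2*(m+2)).factorial : ℕ) : ℝ)

private noncomputable def FR (m g : ℕ) : ℝ :=
  (2*(g:ℝ) - 1) * (((2*(m+2)).choose (2*g) : ℕ) : ℝ)
    * ((bernoulli (2*g) : ℚ) : ℝ) * 2^(2*(m+2)-2*g)


set_option maxHeartbeats 2000000 in
/-- The formal series `F(λ;ℏ) = Σ_{g≥0} ℏ^{2g−2} A_g(λ)` with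
`A_0 = 2λ²log(2λ) − 3λ²`, `A_1 = −(1/12)log λ`,
`A_g = (B_{2g}/(2g(2g−2)))(2λ)^{2−2g}` (g ≥ 2) solves
`F(λ+ℏ) − 2F(λ) + F(λ−ℏ) = 2log(2λ) + log(2λ+ℏ) + log(2λ−ℏ)` order by order in `ℏ`. -/
theorem stmt3 (A : ℕ → ℝ → ℝ)
    (hA0 : ∀ l : ℝ, 0 < l → A 0 l = 2 * l ^ 2 * Real.log (2 * l) - 3 * l ^ 2)
    (hA1 : ∀ l : ℝ, 0 < l → A 1 l = -(1 / 12) * Real.log l)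
    (hAg : ∀ g : ℕ, 2 ≤ g → ∀ l : ℝ, 0 < l →
      A g l = (bernoulli (2 * g) : ℝ) / (2 * (g : ℝ) * (2 * (g : ℝ) - 2))
                * (2 * l) ^ (2 - 2 * (g : ℤ)))
    (n : ℕ) (hn : 1 ≤ n) (l : ℝ) (hl : 0 < l) :
    ∑ k ∈ Finset.Icc 1 n,
        2 / (Nat.factorial (2 * k) : ℝ) * iteratedDeriv (2 * k) (A (n - k)) l
      = if n = 1 then 4 * Real.log (2 * l)
        else -(1 / ((n : ℝ) - 1)) * (2 * l) ^ (2 - 2 * (n : ℤ)) := by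
  rcases eq_or_lt_of_le hn with h1 | h2
  · -- case n = 1
    subst h1
    rw [if_pos rfl, Finset.Icc_self, Finset.sum_singleton]
    rw [show (1:ℕ)-1 = 0 from rfl]
    rw [iterD_congr hl (fun x hx => hA0 x hx) (2*1)]
    rw [show (2*1:ℕ) = 0+1+1 from rfl]
    rw [iterD_step (fun x hx => hd_f0 hx) hl, iterD_step (fun x hx => hd_f1 hx) hl,
      iteratedDeriv_zero]
    norm_num [Nat.factorial]
  · -- case 2 ≤ n
    obtain ⟨m, rfl⟩ : ∃ m, n = m + 2 := ⟨n - 2, by omega⟩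
    rw [if_neg (by omega)]
    have hfne : ∀ j : ℕ, ((j.factorial : ℕ) : ℝ) ≠ 0 :=
      fun j => Nat.cast_ne_zero.mpr (Nat.factorial_ne_zero j)
    -- factorial expansions
    have hnatexp : (((2*(m+2)).factorial : ℕ) : ℝ)
        = (2*(m:ℝ)+4)*(2*(m:ℝ)+3)*(2*(m:ℝ)+2)*((2*m+1).factorial : ℝ) := by
      conv_lhs => rw [show 2*(m+2) = (2*m+3)+1 from by omega, Nat.factorial_succ,
        show 2*m+3 = (2*m+2)+1 from by omega, Nat.factorial_succ,
        show 2*m+2 = (2*m+1)+1 from by omega, Nat.factorial_succ]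
      push_cast
      ring
    have hexp2 : (((2*(m+1)).factorial : ℕ) : ℝ) = (2*(m:ℝ)+2)*((2*m+1).factorial : ℝ) := by
      conv_lhs => rw [show 2*(m+1) = (2*m+1)+1 from by omega, Nat.factorial_succ]
      push_cast
      ring
    -- power folding
    have hpow' : ∀ g : ℕ, g ≤ m+2 →
        (2:ℝ)^(2*(m+2)-2*g) * (2:ℝ)^(2 - 2*((m+2:ℕ):ℤ)) = (2:ℝ)^(2-2*(g:ℤ)) := by
      intro g hg
      rw [← zpow_natCast (2:ℝ) (2*(m+2)-2*g),
        ← zpow_add₀ (by norm_num : (2:ℝ) ≠ 0)]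
      congr 1
      omega
    -- generic coefficient folding
    have hTgen : ∀ g : ℕ, g ≤ m+2 →
        cstR m * FR m g * ((2:ℝ)^(2 - 2*((m+2:ℕ):ℤ)) * l ^ (2 - 2*((m+2:ℕ):ℤ)))
        = (cstR m * ((2*(g:ℝ)-1) * (((2*(m+2)).choose (2*g) : ℕ) : ℝ)
            * ((bernoulli (2*g) : ℚ) : ℝ)) * (2:ℝ)^(2-2*(g:ℤ)))
              * l ^ (2 - 2*((m+2:ℕ):ℤ)) := by
      intro g hg
      rw [← hpow' g hg, FR]
      ring
    -- derivative values
    have hV0 : iteratedDeriv (2*(m+2)) (A 0) l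
        = -(4 * ((2*m+1).factorial : ℝ)) * l ^ (2 - 2*((m+2:ℕ):ℤ)) := by
      rw [iterD_congr hl (fun x hx => hA0 x hx), D0 hl (m+2) (by omega),
        show 2*(m+2)-3 = 2*m+1 from by omega]
    have hV1 : iteratedDeriv (2*(m+1)) (A 1) l
        = (1/12) * ((2*m+1).factorial : ℝ) * l ^ (2 - 2*((m+2:ℕ):ℤ)) := by
      rw [iterD_congr hl (fun x hx => hA1 x hx),
        show 2*(m+1) = 2*(m+2)-2 from by omega, D1 hl (m+2) (by omega),
        show 2*(m+2)-3 = 2*m+1 from by omega]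
    have hVg : ∀ g : ℕ, 2 ≤ g → g ≤ m+1 →
        iteratedDeriv (2*((m+2)-g)) (A g) l
          = ((bernoulli (2*g) : ℚ) : ℝ) / (2*(g:ℝ)*(2*(g:ℝ)-2)) * (2:ℝ)^(2-2*(g:ℤ))
            * (((2*m+1).factorial : ℝ)/(((2*g-3).factorial : ℕ) : ℝ))
            * l ^ (2 - 2*((m+2:ℕ):ℤ)) := by
      intro g hg2 hgm
      have hcg : ∀ x : ℝ, 0 < x → A g x
          = ((bernoulli (2*g) : ℚ) : ℝ) / (2*(g:ℝ)*(2*(g:ℝ)-2)) * (2:ℝ)^(2-2*(g:ℤ))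
              * x^(2-2*(g:ℤ)) := by
        intro x hx
        rw [hAg g hg2 x hx, mul_zpow]
        ring
      rw [iterD_congr hl hcg, Dg hl _ (m+2) g hg2 (by omega),
        show 2*(m+2)-3 = 2*m+1 from by omega]
    -- per-term identities
    have hT0 : 2 / (((2*(m+2)).factorial : ℕ) : ℝ) * iteratedDeriv (2*(m+2)) (A 0) l
        = cstR m * FR m 0 * ((2:ℝ)^(2 - 2*((m+2:ℕ):ℤ)) * l ^ (2 - 2*((m+2:ℕ):ℤ))) := by
      rw [hV0, hTgen 0 (by omega)]
      simp only [Nat.cast_zero, mul_zero, Nat.mul_zero, Nat.choose_zero_right,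
        bernoulli_zero, Nat.cast_one, Rat.cast_one]
      rw [hnatexp, cstR, hnatexp]
      have h4 : (2:ℝ)^((2:ℤ) - 0) = 4 := by norm_num
      rw [h4]
      field_simp
      ring
    have hT1 : 2 / (((2*(m+1)).factorial : ℕ) : ℝ) * iteratedDeriv (2*(m+1)) (A 1) l
        = cstR m * FR m 1 * ((2:ℝ)^(2 - 2*((m+2:ℕ):ℤ)) * l ^ (2 - 2*((m+2:ℕ):ℤ))) := by
      have hC2n : (((2*(m+2)).choose 2 : ℕ) : ℝ) * 2 * (((2*(m+1)).factorial : ℕ) : ℝ)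
          = (((2*(m+2)).factorial : ℕ) : ℝ) := by
        have h := Nat.choose_mul_factorial_mul_factorial (by omega : 2 ≤ 2*(m+2))
        rw [show 2*(m+2)-2 = 2*(m+1) from by omega] at h
        exact_mod_cast congrArg (Nat.cast : ℕ → ℝ) h
      rw [hV1, hTgen 1 (by omega)]
      have hb2 : ((bernoulli (2*1) : ℚ) : ℝ) = 1/6 := by
        norm_num [bernoulli_eq_bernoulli'_of_ne_one, bernoulli'_two]
      rw [hb2]
      have h1 : (2:ℝ)^((2:ℤ) - 2*((1:ℕ):ℤ)) = 1 := by norm_num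
      rw [h1, cstR]
      rw [← hC2n, hexp2]
      have hcpos : (((2*(m+2)).choose 2 : ℕ) : ℝ) ≠ 0 :=
        Nat.cast_ne_zero.mpr (Nat.choose_pos (by omega : 2 ≤ 2*(m+2))).ne'
      field_simp
      ring
    have hTg : ∀ k ∈ Icc 1 m,
        2 / (((2*k).factorial : ℕ) : ℝ) * iteratedDeriv (2*k) (A (m+2-k)) l
          = cstR m * FR m (m+2-k)
              * ((2:ℝ)^(2 - 2*((m+2:ℕ):ℤ)) * l ^ (2 - 2*((m+2:ℕ):ℤ))) := by
      intro k hk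
      rw [Finset.mem_Icc] at hk
      obtain ⟨g, hgdef⟩ : ∃ g, m+2-k = g := ⟨_, rfl⟩
      rw [hgdef]
      have hg2 : 2 ≤ g := by omega
      have hgm : g ≤ m+1 := by omega
      have hk2 : 2*k = 2*((m+2)-g) := by omega
      have hgR : (2:ℝ) ≤ (g:ℝ) := by exact_mod_cast hg2
      obtain ⟨j, hj⟩ : ∃ j, g = j + 2 := ⟨g-2, by omega⟩
      have hfg : (((2*g).factorial : ℕ) : ℝ)
          = (2*(g:ℝ))*(2*(g:ℝ)-1)*(2*(g:ℝ)-2)*(((2*g-3).factorial : ℕ) : ℝ) := by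
        subst hj
        have hnat : (2*(j+2)).factorial
            = ((2*j+1)+1+1+1)*(((2*j+1)+1+1)*(((2*j+1)+1)*(2*j+1).factorial)) := by
          conv_lhs => rw [show 2*(j+2) = (2*j+1)+1+1+1 from by omega,
            Nat.factorial_succ, Nat.factorial_succ, Nat.factorial_succ]
        rw [hnat, show 2*(j+2)-3 = 2*j+1 from by omega]
        push_cast
        ring
      have hCg : (((2*(m+2)).choose (2*g) : ℕ) : ℝ) * (((2*g).factorial : ℕ) : ℝ)
          * (((2*k).factorial : ℕ) : ℝ) = (((2*(m+2)).factorial : ℕ) : ℝ) := by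
        have h := Nat.choose_mul_factorial_mul_factorial (by omega : 2*g ≤ 2*(m+2))
        rw [show 2*(m+2)-2*g = 2*k from by omega] at h
        exact_mod_cast congrArg (Nat.cast : ℕ → ℝ) h
      have hN4 : (((2*(m+2)).factorial : ℕ) : ℝ)
          = (((2*(m+2)).choose (2*g) : ℕ) : ℝ)
            * ((2*(g:ℝ))*(2*(g:ℝ)-1)*(2*(g:ℝ)-2)*(((2*g-3).factorial : ℕ) : ℝ))
            * (((2*k).factorial : ℕ) : ℝ) := by
        rw [← hfg, hCg]
      rw [hk2, hVg g hg2 hgm, ← hk2, hTgen g (by omega), cstR]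
      have h2g0 : (2*(g:ℝ)) ≠ 0 := by positivity
      have h2g1 : (2*(g:ℝ)-1) ≠ 0 := by nlinarith
      have h2g2 : (2*(g:ℝ)-2) ≠ 0 := by nlinarith
      have hCne : (((2*(m+2)).choose (2*g) : ℕ) : ℝ) ≠ 0 :=
        Nat.cast_ne_zero.mpr (Nat.choose_pos (by omega : 2*g ≤ 2*(m+2))).ne'
      exact scal _ _ _ _ _ _ _ _ _ (hfne _) h2g0 h2g1 h2g2 (hfne _) hCne hN4
    -- assemble the sum
    have hstep1 : ∑ k ∈ Finset.Icc 1 (m+2),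
        2 / (((2*k).factorial : ℕ) : ℝ) * iteratedDeriv (2*k) (A (m+2-k)) l
        = (∑ g ∈ range (m+2), cstR m * FR m g)
            * ((2:ℝ)^(2 - 2*((m+2:ℕ):ℤ)) * l ^ (2 - 2*((m+2:ℕ):ℤ))) := by
      rw [← Finset.Ico_add_one_right_eq_Icc, Finset.sum_Ico_eq_sum_range]
      rw [show m+2+1-1 = (m+1)+1 from by omega]
      rw [Finset.sum_range_succ, Finset.sum_range_succ]
      rw [show 1+(m+1) = m+2 from by omega, show 1+m = m+1 from by omega]
      rw [show m+2-(m+2) = 0 from by omega, show m+2-(m+1) = 1 from by omega]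
      rw [hT0, hT1]
      have hmid : ∀ i ∈ range m,
          2 / (((2*(1+i)).factorial : ℕ) : ℝ) * iteratedDeriv (2*(1+i)) (A (m+2-(1+i))) l
            = cstR m * FR m ((m-1-i)+1+1)
                * ((2:ℝ)^(2 - 2*((m+2:ℕ):ℤ)) * l ^ (2 - 2*((m+2:ℕ):ℤ))) := by
        intro i hi
        rw [mem_range] at hi
        rw [hTg (1+i) (Finset.mem_Icc.mpr (by omega))]
        rw [show m+2-(1+i) = (m-1-i)+1+1 from by omega]
      rw [Finset.sum_congr rfl hmid,
        Finset.sum_range_reflect (fun j => cstR m * FR m (j+1+1)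
          * ((2:ℝ)^(2 - 2*((m+2:ℕ):ℤ)) * l ^ (2 - 2*((m+2:ℕ):ℤ)))) m]
      have hpeel : ∑ g ∈ range (m+2), cstR m * FR m g
          = (∑ j ∈ range m, cstR m * FR m (j+1+1)) + cstR m * FR m (0+1)
              + cstR m * FR m 0 := by
        rw [show m+2 = (m+1)+1 from rfl,
          Finset.sum_range_succ' (fun g => cstR m * FR m g) (m+1),
          Finset.sum_range_succ' (fun g => cstR m * FR m (g+1)) m]
      rw [hpeel, show (0+1 : ℕ) = 1 from rfl]
      rw [add_mul, add_mul, Finset.sum_mul]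
    rw [hstep1]
    -- evaluate the coefficient sum
    have keyR : ∑ g ∈ range (m+2), FR m g
        = -(2*((m:ℝ)+2)) * (2*((m:ℝ)+2)-1) := by
      have h := key_even (m+2) (by omega)
      have h2 := congrArg (fun q : ℚ => (q : ℝ)) h
      push_cast at h2
      simp only [FR]
      exact h2
    rw [← Finset.mul_sum, keyR]
    -- final numeric identity
    rw [cstR, hnatexp, mul_zpow]
    have hne : ((m:ℝ)+2) - 1 ≠ 0 := by
      have : (0:ℝ) ≤ (m:ℝ) := Nat.cast_nonneg m
      nlinarith
    push_cast
    field_simp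
    ring
end

section
/- (Legendre curve) For λ > 0 define F_0(λ) = −λ²·log 2, F_1(λ) = −(1/4)·log λ, and F_g(λ) = (B_{2g}/(2g(2g−2)))·( 4·λ^{2−2g} − (2λ)^{2−2g} ) for g ≥ 2. Then for every integer n ≥ 1 and every λ > 0, Σ_{k=1}^{n} (2/(2k)!) · F_{n−k}^{(2k)}(λ) = log(4λ⁴) − 4·log(2λ) (= −2 log 2) if n = 1, and = (1/(n−1))·(2λ)^{2−2n} if n ≥ 2. (That is, the free energy F(λ;ℏ) = Σ_{g≥0} ℏ^{2g−2} F_g(λ) of the Legendre spectral curve satisfies F(λ+ℏ) − 2F(λ) + F(λ−ℏ) = log(4λ⁴) − 2log(2λ) − log(2λ+ℏ) − log(2λ−ℏ) order by order in ℏ, using log(2λ+ℏ)+log(2λ−ℏ) = 2log(2λ) − Σ_{m≥1}(1/m)(ℏ/(2λ))^{2m}.) -/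
set_option maxHeartbeats 1600000

open Finset

lemma iterZpow (K : ℝ) (p : ℤ) : ∀ (m : ℕ) (x : ℝ), x ≠ 0 →
    iteratedDeriv m (fun y : ℝ => K * y ^ p) x
      = (K * ∏ j ∈ range m, ((p : ℝ) - j)) * x ^ (p - m) := by
  intro m
  induction m with
  | zero => intro x hx; simp
  | succ m ih =>
    intro x hx
    rw [iteratedDeriv_succ]
    have hev : iteratedDeriv m (fun y : ℝ => K * y ^ p)
        =ᶠ[nhds x] fun y => (K * ∏ j ∈ range m, ((p : ℝ) - j)) * y ^ (p - m) := by
      filter_upwards [isOpen_compl_singleton.mem_nhds hx] with y hy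
      exact ih y hy
    rw [hev.deriv_eq, deriv_const_mul _ (differentiableAt_zpow.mpr (Or.inl hx)), deriv_zpow,
      prod_range_succ]
    rw [show p - (m + 1 : ℕ) = p - m - 1 by push_cast; ring]
    push_cast
    ring

lemma iterLog (c : ℝ) (m : ℕ) (x : ℝ) (hx : x ≠ 0) :
    iteratedDeriv (m + 1) (fun y : ℝ => c * Real.log y) x
      = (c * ∏ j ∈ range m, ((-1 : ℝ) - j)) * x ^ (-1 - (m : ℤ)) := by
  rw [iteratedDeriv_succ']
  have h1 : deriv (fun y : ℝ => c * Real.log y) =ᶠ[nhds x] fun y : ℝ => c * y ^ (-1 : ℤ) := by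
    filter_upwards [isOpen_compl_singleton.mem_nhds hx] with y hy
    rw [deriv_const_mul _ (Real.differentiableAt_log hy), Real.deriv_log, zpow_neg_one]
  rw [h1.iteratedDeriv_eq, iterZpow c (-1) m x hx]
  norm_num

lemma iterConst (c : ℝ) (m : ℕ) : iteratedDeriv m (fun _ : ℝ => c) = fun _ => if m = 0 then c else 0 := by
  induction m with
  | zero => simp
  | succ k ih =>
    rw [iteratedDeriv_succ, ih]
    cases k <;> simp [deriv_const]

lemma derivSq (c : ℝ) : deriv (deriv (fun y : ℝ => c * y ^ 2)) = fun _ => 2 * c := by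
  have h1 : deriv (fun y : ℝ => c * y ^ 2) = fun y => c * (2 * y) := by
    funext y
    rw [deriv_const_mul _ (differentiableAt_pow 2), deriv_pow_field]
    norm_num
  rw [h1]
  funext y
  have : (fun y : ℝ => c * (2 * y)) = fun y : ℝ => (c * 2) * y := by funext z; ring
  rw [this, deriv_const_mul _ differentiableAt_fun_id, deriv_id'']
  ring

lemma iterSq (c : ℝ) (m : ℕ) (x : ℝ) :
    iteratedDeriv (m + 2) (fun y : ℝ => c * y ^ 2) x = if m = 0 then 2 * c else 0 := by
  rw [show m + 2 = m + 1 + 1 from rfl, iteratedDeriv_succ', iteratedDeriv_succ', derivSq,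
    iterConst]

lemma boddzero {j : ℕ} (h : Odd j) (h1 : 1 < j) : bernoulli j = 0 := by
  rw [bernoulli_eq_bernoulli'_of_ne_one (by omega), bernoulli'_eq_zero_of_odd h h1]

lemma bsum1 (m : ℕ) (hm : m ≠ 1) :
    ∑ i ∈ range (m+1), (m.choose i : ℚ) * bernoulli i = bernoulli m := by
  rw [sum_range_succ, sum_bernoulli, if_neg hm]
  simp

lemma bsum2 (m : ℕ) (hm : 2 ≤ m) :
    ∑ i ∈ range (m+1), (m.choose i : ℚ) * bernoulli i * 2^(m-i) = m + bernoulli m := by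
  obtain ⟨p, rfl⟩ : ∃ p, m = p+1 := ⟨m-1, by omega⟩
  have hp : 1 ≤ p := by omega
  have h := sum_range_pow 2 p
  have hl : ∑ k ∈ range 2, (k:ℚ)^p = 1 := by
    rw [show (2:ℕ) = 1+1 from rfl, sum_range_succ, sum_range_one]
    push_cast
    rw [zero_pow (by omega : p ≠ 0)]
    norm_num
  rw [hl, ← Finset.sum_div, eq_div_iff (by positivity : ((p:ℚ)+1) ≠ 0), one_mul] at h
  rw [sum_range_succ]
  have h2 : ∑ i ∈ range (p+1), ((p+1).choose i : ℚ) * bernoulli i * 2^(p+1-i)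
      = ∑ i ∈ range (p+1), bernoulli i * ((p+1).choose i : ℚ) * (2:ℕ)^(p+1-i) := by
    apply sum_congr rfl; intro i _; push_cast; ring
  rw [h2, ← h]
  simp [Nat.choose_self]

lemma bsum3 (p : ℕ) (y : ℚ) :
    ∑ i ∈ range (p+2), ((p+1).choose i : ℚ) * bernoulli i * ((p+1-i : ℕ):ℚ) * y^(p+1-i-1)
      = (p+1) * ∑ i ∈ range (p+1), (p.choose i : ℚ) * bernoulli i * y^(p-i) := by
  rw [sum_range_succ]
  have h0 : ((p+1-(p+1) : ℕ):ℚ) = 0 := by norm_num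
  rw [h0, mul_zero, zero_mul, add_zero, mul_sum]
  apply sum_congr rfl
  intro i hi
  rw [mem_range] at hi
  have hc := Nat.choose_mul_succ_eq p i
  have hc' : (p.choose i : ℚ) * (p+1) = ((p+1).choose i : ℚ) * ((p+1-i : ℕ):ℚ) := by
    exact_mod_cast congrArg (Nat.cast : ℕ → ℚ) hc
  have he : p+1-i-1 = p-i := by omega
  rw [he]
  linear_combination (-(bernoulli i * y^(p-i))) * hc'

lemma sumEO (f : ℕ → ℚ) (n : ℕ) :
    ∑ i ∈ range (2*n+1), f i = ∑ g ∈ range (n+1), f (2*g) + ∑ g ∈ range n, f (2*g+1) := by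
  induction n with
  | zero => simp
  | succ k ih =>
    have e1 : 2*(k+1)+1 = (2*k+1)+1+1 := by ring
    rw [e1, sum_range_succ, sum_range_succ, ih, sum_range_succ (fun g => f (2*g)) (k+1),
      sum_range_succ (fun g => f (2*g+1)) k]
    have e2 : 2*(k+1) = 2*k+1+1 := by ring
    rw [e2]
    ring

lemma fullsum (p : ℕ) (y : ℚ) :
    ∑ i ∈ range (p+2), ((i:ℚ)-1) * ((p+1).choose i : ℚ) * bernoulli i * y^(p+1-i)
      = (p:ℚ) * (∑ i ∈ range (p+2), ((p+1).choose i : ℚ) * bernoulli i * y^(p+1-i))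
        - y * (((p:ℚ)+1) * ∑ i ∈ range (p+1), (p.choose i : ℚ) * bernoulli i * y^(p-i)) := by
  rw [← bsum3 p y, mul_sum, mul_sum, ← sum_sub_distrib]
  apply sum_congr rfl
  intro i hi
  rw [mem_range] at hi
  rcases Nat.lt_or_ge i (p+1) with h | h
  · have hc : ((p+1-i : ℕ):ℚ) = (p:ℚ)+1-i := by
      push_cast [Nat.cast_sub (by omega : i ≤ p+1)]; ring
    obtain ⟨e, he⟩ : ∃ e, p+1-i = e+1 := ⟨p-i, by omega⟩
    rw [hc, he, pow_succ, show e+1-1 = e by omega]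
    ring
  · have hi' : i = p+1 := by omega
    subst hi'
    have h0 : ((p+1-(p+1) : ℕ):ℚ) = 0 := by norm_num
    rw [h0]
    norm_num

lemma evensum1 (m' : ℕ) :
    ∑ g ∈ range (m'+3), (2*(g:ℚ)-1) * ((2*m'+4).choose (2*g) : ℚ) * bernoulli (2*g)
      = (2*(m':ℚ)+3) * bernoulli (2*m'+4) := by
  have hf := fullsum (2*m'+3) 1
  simp only [one_pow, mul_one, one_mul] at hf
  rw [bsum1 (2*m'+3) (by omega),
    boddzero (⟨m'+1, by ring⟩ : Odd (2*m'+3)) (by omega), mul_zero, sub_zero] at hf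
  rw [show (2*m'+3)+2 = (2*m'+4)+1 by ring, show (2*m'+3)+1 = 2*m'+4 by ring] at hf
  rw [bsum1 (2*m'+4) (by omega)] at hf
  have heo := sumEO (fun i => ((i:ℚ)-1) * ((2*m'+4).choose i : ℚ) * bernoulli i) (m'+2)
  rw [show 2*(m'+2)+1 = (2*m'+4)+1 by ring] at heo
  beta_reduce at heo
  have hodd : ∑ g ∈ range (m'+2),
      (((2*g+1 : ℕ):ℚ)-1) * ((2*m'+4).choose (2*g+1) : ℚ) * bernoulli (2*g+1) = 0 := by
    apply sum_eq_zero
    intro g _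
    cases g with
    | zero => norm_num
    | succ g =>
      rw [boddzero (⟨g+1, by omega⟩ : Odd (2*(g+1)+1)) (by omega), mul_zero]
  rw [hf, hodd, add_zero] at heo
  rw [show m'+3 = (m'+2)+1 by ring]
  rw [show (∑ g ∈ range ((m'+2)+1), (2*(g:ℚ)-1) * ((2*m'+4).choose (2*g) : ℚ) * bernoulli (2*g))
      = ∑ g ∈ range ((m'+2)+1), (((2*g : ℕ):ℚ)-1) * ((2*m'+4).choose (2*g) : ℚ) * bernoulli (2*g)
      from sum_congr rfl fun g _ => by push_cast; ring]
  rw [← heo]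
  push_cast
  ring

lemma evensum2 (m' : ℕ) :
    ∑ g ∈ range (m'+3),
        (2*(g:ℚ)-1) * ((2*m'+4).choose (2*g) : ℚ) * bernoulli (2*g) * 2^(2*m'+4-2*g)
      = (2*(m':ℚ)+3) * ((2*(m':ℚ)+4) + bernoulli (2*m'+4))
        - 2*((2*(m':ℚ)+4)*(2*(m':ℚ)+3)) := by
  have hf := fullsum (2*m'+3) 2
  rw [bsum2 (2*m'+3) (by omega),
    boddzero (⟨m'+1, by omega⟩ : Odd (2*m'+3)) (by omega), add_zero] at hf
  rw [show (2*m'+3)+2 = (2*m'+4)+1 by ring, show (2*m'+3)+1 = 2*m'+4 by ring] at hf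
  rw [bsum2 (2*m'+4) (by omega)] at hf
  have heo := sumEO (fun i => ((i:ℚ)-1) * ((2*m'+4).choose i : ℚ) * bernoulli i
      * 2^(2*m'+4-i)) (m'+2)
  rw [show 2*(m'+2)+1 = (2*m'+4)+1 by ring] at heo
  have hodd : ∑ g ∈ range (m'+2),
      (((2*g+1 : ℕ):ℚ)-1) * ((2*m'+4).choose (2*g+1) : ℚ) * bernoulli (2*g+1)
        * 2^(2*m'+4-(2*g+1)) = 0 := by
    apply sum_eq_zero
    intro g _
    cases g with
    | zero => norm_num
    | succ g =>
      rw [boddzero (⟨g+1, by omega⟩ : Odd (2*(g+1)+1)) (by omega), mul_zero, zero_mul]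
  rw [hf, hodd, add_zero] at heo
  rw [show m'+3 = (m'+2)+1 by ring]
  rw [show (∑ g ∈ range ((m'+2)+1), (2*(g:ℚ)-1) * ((2*m'+4).choose (2*g) : ℚ)
        * bernoulli (2*g) * 2^(2*m'+4-2*g))
      = ∑ g ∈ range ((m'+2)+1), (((2*g : ℕ):ℚ)-1) * ((2*m'+4).choose (2*g) : ℚ)
        * bernoulli (2*g) * 2^(2*m'+4-2*g)
      from sum_congr rfl fun g _ => by push_cast; ring]
  rw [← heo]
  push_cast
  ring

lemma bernoulli_two' : bernoulli 2 = 1/6 := by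
  rw [bernoulli_eq_bernoulli'_of_ne_one (by norm_num), bernoulli'_two]

lemma prodDesc (a : ℕ) : ∀ K : ℕ,
    (∏ t ∈ range K, (-(1:ℚ) - (a:ℚ) - (t:ℚ))) * (a.factorial : ℚ)
      = (-1)^K * ((a+K).factorial : ℚ) := by
  intro K
  induction K with
  | zero => simp
  | succ K ih =>
    rw [prod_range_succ, show a+(K+1) = (a+K)+1 by ring, Nat.factorial_succ]
    push_cast
    push_cast at ih
    linear_combination (-(1:ℚ) - a - K) * ih

lemma qzpow (g : ℕ) : (2:ℚ)^((2:ℤ) - 2*(g:ℤ)) = 4 / 4^g := by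
  have h1 : ((2:ℤ) - 2*(g:ℤ)) = 2 - ((2*g : ℕ):ℤ) := by push_cast; ring
  rw [h1, zpow_sub₀ (by norm_num : (2:ℚ) ≠ 0), zpow_natCast, pow_mul]
  norm_num

lemma strip (f : ℕ → ℚ) (m' : ℕ) :
    ∑ i ∈ range m', f (i+2) = ∑ g ∈ range (m'+3), f g - f (m'+2) - f 1 - f 0 := by
  rw [show m'+3 = (m'+2)+1 by ring, sum_range_succ, show m'+2 = (m'+1)+1 by ring,
    sum_range_succ', sum_range_succ']
  rw [show (∑ i ∈ range m', f (i+1+1)) = ∑ i ∈ range m', f (i+2)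
    from sum_congr rfl fun i _ => by norm_num]
  ring

lemma perterm (m' j : ℕ) (hj : j < m') :
    (2:ℚ)/((2*(m'-j)).factorial : ℚ)
      * (bernoulli (2*(j+2)) / (2*((j+2 : ℕ):ℚ)*(2*((j+2:ℕ):ℚ)-2))
        * (4 - (2:ℚ)^((2:ℤ) - 2*((j+2 : ℕ):ℤ)))
        * ∏ t ∈ range (2*(m'-j)), ((2:ℚ) - 2*((j+2:ℕ):ℚ) - (t:ℚ)))
  = (8:ℚ)/((2*(m':ℚ)+4)*((2*(m':ℚ)+3)*(2*(m':ℚ)+2)))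
      * ((2*((j+2:ℕ):ℚ)-1) * ((2*m'+4).choose (2*(j+2)) : ℚ) * bernoulli (2*(j+2))
        - (2*((j+2:ℕ):ℚ)-1) * ((2*m'+4).choose (2*(j+2)) : ℚ) * bernoulli (2*(j+2))
           * 2^(2*m'+4-2*(j+2)) / 2^(2*m'+4)) := by
  have hfacA : ((2*(m'-j)).factorial : ℚ) ≠ 0 := by
    exact_mod_cast (Nat.factorial_pos _).ne'
  have hfacD : (((2*j+1).factorial : ℕ) : ℚ) ≠ 0 := by
    exact_mod_cast (Nat.factorial_pos _).ne'
  -- product value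
  have hprod : (∏ t ∈ range (2*(m'-j)), ((2:ℚ) - 2*((j+2:ℕ):ℚ) - (t:ℚ)))
      = ((2*m'+1).factorial : ℚ) / ((2*j+1).factorial : ℚ) := by
    have h1 : (∏ t ∈ range (2*(m'-j)), ((2:ℚ) - 2*((j+2:ℕ):ℚ) - (t:ℚ)))
        = ∏ t ∈ range (2*(m'-j)), (-(1:ℚ) - ((2*j+1 : ℕ):ℚ) - (t:ℚ)) :=
      prod_congr rfl fun t _ => by push_cast; ring
    have h2 := prodDesc (2*j+1) (2*(m'-j))
    rw [show 2*j+1+2*(m'-j) = 2*m'+1 by omega,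
      Even.neg_one_pow (⟨m'-j, by ring⟩ : Even (2*(m'-j))), one_mul] at h2
    rw [h1, eq_div_iff hfacD, h2]
  -- choose/factorial relation
  have hf1 : (2*(j+2)).factorial = (2*(j+2)) * ((2*j+3) * ((2*j+2) * (2*j+1).factorial)) := by
    rw [show 2*(j+2) = 2*j+3+1 by ring, Nat.factorial_succ, show 2*j+3 = 2*j+2+1 by omega,
      Nat.factorial_succ, show 2*j+2 = 2*j+1+1 by omega, Nat.factorial_succ]
  have hf2 : (2*m'+4).factorial = (2*m'+4) * ((2*m'+3) * ((2*m'+2) * (2*m'+1).factorial)) := by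
    rw [show 2*m'+4 = 2*m'+3+1 by omega, Nat.factorial_succ, show 2*m'+3 = 2*m'+2+1 by omega,
      Nat.factorial_succ, show 2*m'+2 = 2*m'+1+1 by omega, Nat.factorial_succ]
  have hch := Nat.choose_mul_factorial_mul_factorial (show 2*(j+2) ≤ 2*m'+4 by omega)
  rw [show 2*m'+4-2*(j+2) = 2*(m'-j) by omega, hf1, hf2] at hch
  have hch' : ((2*m'+4).choose (2*(j+2)) : ℚ)
      * ((2*(j:ℚ)+4) * ((2*(j:ℚ)+3) * ((2*(j:ℚ)+2) * ((2*j+1).factorial : ℚ))))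
      * ((2*(m'-j)).factorial : ℚ)
      = (2*(m':ℚ)+4)*((2*(m':ℚ)+3)*((2*(m':ℚ)+2)*((2*m'+1).factorial : ℚ))) := by
    exact_mod_cast congrArg (Nat.cast : ℕ → ℚ) hch
  have hM3 : ((2*(m':ℚ)+4)*((2*(m':ℚ)+3)*(2*(m':ℚ)+2))) ≠ 0 := by positivity
  have hE : ((2*m'+1).factorial : ℚ)
      = ((2*m'+4).choose (2*(j+2)) : ℚ)
          * ((2*(j:ℚ)+4) * ((2*(j:ℚ)+3) * ((2*(j:ℚ)+2) * ((2*j+1).factorial : ℚ))))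
          * ((2*(m'-j)).factorial : ℚ)
        / ((2*(m':ℚ)+4)*((2*(m':ℚ)+3)*(2*(m':ℚ)+2))) := by
    rw [eq_div_iff hM3]
    linear_combination -hch'
  have hY : (2:ℚ)^(2*(m'-j)) = 2^(2*m'+4) / 4^(j+2) := by
    rw [eq_div_iff (by positivity), show (4:ℚ) = 2^2 by norm_num, ← pow_mul, ← pow_add]
    congr 1
    omega
  rw [show 2*m'+4-2*(j+2) = 2*(m'-j) by omega, hprod, qzpow (j+2), hE, hY]
  have h4 : ((4:ℚ)^(j+2)) ≠ 0 := by positivity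
  have h2 : ((2:ℚ)^(2*m'+4)) ≠ 0 := by positivity
  have hj2 : ((j+2 : ℕ):ℚ) = (j:ℚ)+2 := by push_cast; ring
  rw [hj2, show (2*((j:ℚ)+2)*(2*((j:ℚ)+2)-2)) = (2*(j:ℚ)+4)*(2*(j:ℚ)+2) by ring]
  have hd1 : (2*(j:ℚ)+4) ≠ 0 := by positivity
  have hd2 : (2*(j:ℚ)+2) ≠ 0 := by positivity
  have hd3 : (2*(j:ℚ)+3) ≠ 0 := by positivity
  have hm1 : (2*(m':ℚ)+4) ≠ 0 := by positivity
  have hm2 : (2*(m':ℚ)+3) ≠ 0 := by positivity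
  have hm3 : (2*(m':ℚ)+2) ≠ 0 := by positivity
  field_simp
  ring

lemma qmain (m' : ℕ) :
    1/(4*((m':ℚ)+1))
      + ∑ k ∈ Icc 1 m', (2:ℚ)/((2*k).factorial : ℚ)
          * (bernoulli (2*(m'+2-k)) / (2*((m'+2-k : ℕ):ℚ)*(2*((m'+2-k : ℕ):ℚ)-2))
            * (4 - (2:ℚ)^((2:ℤ) - 2*((m'+2-k : ℕ):ℤ)))
            * ∏ t ∈ range (2*k), ((2:ℚ) - 2*((m'+2-k : ℕ):ℚ) - (t:ℚ)))
      = 1/((m':ℚ)+1) * (2:ℚ)^((2:ℤ) - 2*((m'+2 : ℕ):ℤ)) := by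
  rw [← Finset.Ico_add_one_right_eq_Icc, sum_Ico_eq_sum_range]
  rw [show m'+1-1 = m' by omega]
  rw [← sum_range_reflect]
  have hs : (∑ j ∈ range m',
        (2:ℚ) / ((2 * (1 + (m' - 1 - j))).factorial : ℚ) *
          (bernoulli (2 * (m' + 2 - (1 + (m' - 1 - j)))) /
                (2 * ((m' + 2 - (1 + (m' - 1 - j)) : ℕ):ℚ)
                  * (2 * ((m' + 2 - (1 + (m' - 1 - j)) : ℕ):ℚ) - 2)) *
              (4 - (2:ℚ) ^ ((2:ℤ) - 2 * ((m' + 2 - (1 + (m' - 1 - j)) : ℕ):ℤ))) *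
            ∏ t ∈ range (2 * (1 + (m' - 1 - j))),
              ((2:ℚ) - 2 * ((m' + 2 - (1 + (m' - 1 - j)) : ℕ):ℚ) - (t:ℚ))))
      = ∑ j ∈ range m',
          (8:ℚ)/((2*(m':ℚ)+4)*((2*(m':ℚ)+3)*(2*(m':ℚ)+2)))
            * ((2*((j+2:ℕ):ℚ)-1) * ((2*m'+4).choose (2*(j+2)) : ℚ) * bernoulli (2*(j+2))
              - (2*((j+2:ℕ):ℚ)-1) * ((2*m'+4).choose (2*(j+2)) : ℚ) * bernoulli (2*(j+2))
                 * 2^(2*m'+4-2*(j+2)) / 2^(2*m'+4)) := by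
    apply sum_congr rfl
    intro j hj
    rw [mem_range] at hj
    rw [show 1 + (m' - 1 - j) = m'-j by omega, show m'+2-(m'-j) = j+2 by omega]
    exact perterm m' j hj
  rw [hs]
  rw [← mul_sum, sum_sub_distrib, ← sum_div]
  have hu := strip (fun g => (2*(g:ℚ)-1) * ((2*m'+4).choose (2*g) : ℚ) * bernoulli (2*g)) m'
  have hv := strip (fun g => (2*(g:ℚ)-1) * ((2*m'+4).choose (2*g) : ℚ) * bernoulli (2*g)
    * 2^(2*m'+4-2*g)) m'
  beta_reduce at hu hv
  rw [evensum1, show 2*(m'+2) = 2*m'+4 by ring, Nat.choose_self] at hu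
  rw [evensum2, show 2*(m'+2) = 2*m'+4 by ring, Nat.choose_self,
    show 2*m'+4-(2*m'+4) = 0 by omega, show 2*m'+4-2*1 = 2*m'+2 by omega,
    show 2*m'+4-2*0 = 2*m'+4 by omega] at hv
  rw [hu, hv, qzpow (m'+2)]
  have hc2 : ((2*m'+4).choose 2) = (m'+2)*(2*m'+3) := by
    rw [Nat.choose_two_right, show 2*m'+4-1 = 2*m'+3 by omega,
      show (2*m'+4)*(2*m'+3) = 2*((m'+2)*(2*m'+3)) by ring,
      Nat.mul_div_cancel_left _ (by norm_num : 0 < 2)]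
  rw [hc2, bernoulli_two', bernoulli_zero]
  have h2a : (2:ℚ)^(2*m'+4) = 16 * 4^m' := by
    rw [pow_add, pow_mul]
    norm_num
    ring
  have h2b : (2:ℚ)^(2*m'+2) = 4 * 4^m' := by
    rw [pow_add, pow_mul]
    norm_num
    ring
  have h2c : (4:ℚ)^(m'+2) = 16 * 4^m' := by
    rw [pow_add]
    norm_num
    ring
  rw [h2a, h2b, h2c, pow_zero]
  have h1 : ((m':ℚ)+1) ≠ 0 := by positivity
  have h2 : ((4:ℚ)^m') ≠ 0 := by positivity
  have hm1 : (2*(m':ℚ)+4) ≠ 0 := by positivity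
  have hm2 : (2*(m':ℚ)+3) ≠ 0 := by positivity
  have hm3 : (2*(m':ℚ)+2) ≠ 0 := by positivity
  push_cast
  field_simp
  ring

lemma prodNegR : ∀ K : ℕ, ∏ t ∈ range K, ((-1:ℝ) - (t:ℝ)) = (-1)^K * (K.factorial : ℝ) := by
  intro K
  induction K with
  | zero => simp
  | succ K ih =>
    rw [prod_range_succ, ih, Nat.factorial_succ]
    push_cast
    ring

/-- (Legendre curve) The free energy `F(λ;ℏ) = Σ_{g≥0} ℏ^{2g−2} F_g(λ)` with
`F_0 = −λ²log 2`, `F_1 = −(1/4)log λ`,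
`F_g = (B_{2g}/(2g(2g−2)))(4λ^{2−2g} − (2λ)^{2−2g})` (g ≥ 2) satisfies
`F(λ+ℏ) − 2F(λ) + F(λ−ℏ) = log(4λ⁴) − 2log(2λ) − log(2λ+ℏ) − log(2λ−ℏ)`
order by order in `ℏ`. -/
theorem stmt13 (F : ℕ → ℝ → ℝ)
    (hF0 : ∀ l : ℝ, 0 < l → F 0 l = -(l ^ 2) * Real.log 2)
    (hF1 : ∀ l : ℝ, 0 < l → F 1 l = -(1 / 4) * Real.log l)
    (hFg : ∀ g : ℕ, 2 ≤ g → ∀ l : ℝ, 0 < l →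
      F g l = (bernoulli (2 * g) : ℝ) / (2 * (g : ℝ) * (2 * (g : ℝ) - 2))
                * (4 * l ^ (2 - 2 * (g : ℤ)) - (2 * l) ^ (2 - 2 * (g : ℤ))))
    (n : ℕ) (hn : 1 ≤ n) (l : ℝ) (hl : 0 < l) :
    ∑ k ∈ Finset.Icc 1 n,
        2 / (Nat.factorial (2 * k) : ℝ) * iteratedDeriv (2 * k) (F (n - k)) l
      = if n = 1 then Real.log (4 * l ^ 4) - 4 * Real.log (2 * l)
        else 1 / ((n : ℝ) - 1) * (2 * l) ^ (2 - 2 * (n : ℤ)) := by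
  have hev0 : F 0 =ᶠ[nhds l] fun y : ℝ => (-Real.log 2) * y^2 := by
    filter_upwards [isOpen_Ioi.mem_nhds hl] with y hy
    rw [hF0 y hy]; ring
  rcases Nat.lt_or_ge n 2 with h2 | h2
  · obtain rfl : n = 1 := by omega
    rw [if_pos rfl, Finset.Icc_self, Finset.sum_singleton]
    rw [show (1-1 : ℕ) = 0 from rfl]
    rw [Filter.EventuallyEq.iteratedDeriv_eq (2*1) hev0]
    rw [show 2*1 = 0+2 from rfl, iterSq, if_pos rfl]
    rw [Real.log_mul (by norm_num) (by positivity), Real.log_pow,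
      Real.log_mul (by norm_num) hl.ne', show (4:ℝ) = 2^2 by norm_num, Real.log_pow]
    norm_num [Nat.factorial]
    ring
  · obtain ⟨m', rfl⟩ : ∃ m', n = m'+2 := ⟨n-2, by omega⟩
    rw [if_neg (by omega)]
    set E : ℤ := 2 - 2*((m'+2 : ℕ):ℤ) with hE
    -- split off top two terms
    rw [show Finset.Icc 1 (m'+2) = Finset.Icc 1 ((m'+1)+1) from by norm_num,
      Finset.sum_Icc_succ_top (by omega), Finset.sum_Icc_succ_top (by omega)]
    rw [show m'+2-((m'+1)+1) = 0 by omega, show m'+2-(m'+1) = 1 by omega]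
    -- the g = 0 term vanishes
    have hz : iteratedDeriv (2*((m'+1)+1)) (F 0) l = 0 := by
      rw [Filter.EventuallyEq.iteratedDeriv_eq _ hev0,
        show 2*((m'+1)+1) = (2*m'+2)+2 by ring, iterSq, if_neg (by omega)]
    rw [hz, mul_zero, add_zero]
    -- the g = 1 term
    have hev1 : F 1 =ᶠ[nhds l] fun y : ℝ => (-(1/4) : ℝ) * Real.log y := by
      filter_upwards [isOpen_Ioi.mem_nhds hl] with y hy
      rw [hF1 y hy]
    have hlog : 2 / ((2*(m'+1)).factorial : ℝ) * iteratedDeriv (2*(m'+1)) (F 1) l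
        = (1/(4*((m':ℝ)+1))) * l^E := by
      rw [Filter.EventuallyEq.iteratedDeriv_eq _ hev1,
        show 2*(m'+1) = (2*m'+1)+1 by ring, iterLog (-(1/4)) (2*m'+1) l hl.ne',
        prodNegR (2*m'+1), Odd.neg_one_pow ⟨m', by ring⟩,
        show (-1 - ((2*m'+1 : ℕ):ℤ)) = E by push_cast [hE]; ring, Nat.factorial_succ]
      have hne : ((2*m'+1).factorial : ℝ) ≠ 0 := by
        exact_mod_cast (Nat.factorial_pos _).ne'
      have hne3 : ((m':ℝ)+1) ≠ 0 := by positivity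
      push_cast
      field_simp
      ring
    rw [hlog]
    -- generic terms
    have hTk : ∀ k ∈ Icc 1 m', 2/((2*k).factorial : ℝ) * iteratedDeriv (2*k) (F (m'+2-k)) l
        = (((2:ℚ)/((2*k).factorial : ℚ)
            * (bernoulli (2*(m'+2-k)) / (2*((m'+2-k : ℕ):ℚ)*(2*((m'+2-k : ℕ):ℚ)-2))
              * (4 - (2:ℚ)^((2:ℤ) - 2*((m'+2-k : ℕ):ℤ)))
              * ∏ t ∈ range (2*k), ((2:ℚ) - 2*((m'+2-k : ℕ):ℚ) - (t:ℚ))) : ℚ) : ℝ)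
          * l^E := by
      intro k hk
      rw [mem_Icc] at hk
      set g := m'+2-k with hg
      have hg2 : 2 ≤ g := by omega
      have hev : F g =ᶠ[nhds l] fun y : ℝ =>
          ((bernoulli (2*g) : ℝ)/(2*(g:ℝ)*(2*(g:ℝ)-2)) * (4 - (2:ℝ)^((2:ℤ) - 2*(g:ℤ))))
            * y^((2:ℤ) - 2*(g:ℤ)) := by
        filter_upwards [isOpen_Ioi.mem_nhds hl] with y hy
        rw [hFg g hg2 y hy, mul_zpow]
        ring
      rw [Filter.EventuallyEq.iteratedDeriv_eq _ hev, iterZpow _ _ (2*k) l hl.ne']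
      rw [show ((2:ℤ) - 2*(g:ℤ)) - ((2*k : ℕ):ℤ) = E from by
        rw [hE, hg]
        push_cast [Nat.cast_sub (show k ≤ m'+2 by omega)]
        ring]
      push_cast
      ring
    rw [Finset.sum_congr rfl hTk, ← Finset.sum_mul, ← Rat.cast_sum]
    -- final combination via qmain
    have keyR : (1:ℝ)/(4*((m':ℝ)+1))
        + ((∑ k ∈ Icc 1 m', ((2:ℚ)/((2*k).factorial : ℚ)
            * (bernoulli (2*(m'+2-k)) / (2*((m'+2-k : ℕ):ℚ)*(2*((m'+2-k : ℕ):ℚ)-2))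
              * (4 - (2:ℚ)^((2:ℤ) - 2*((m'+2-k : ℕ):ℤ)))
              * ∏ t ∈ range (2*k), ((2:ℚ) - 2*((m'+2-k : ℕ):ℚ) - (t:ℚ)))) : ℚ) : ℝ)
        = 1/((m':ℝ)+1) * (2:ℝ)^E := by
      have := congrArg (fun q : ℚ => (q : ℝ)) (qmain m')
      push_cast at this ⊢
      convert this using 2
      simp [hE]
    rw [show ((m'+2 : ℕ):ℝ) - 1 = (m':ℝ)+1 from by push_cast; ring, mul_zpow]
    linear_combination l^E * keyR
end
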